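/- Let P be a finite poset with n ≥ 2 elements that is (2+2)-free, (1+1+1)-free, and irreducible with respect to ordinal sum. Then among any three pairwise distinct lower sets of P, at least two are comparable under inclusion; that is, the distributive lattice L(P) of lower sets of P has width at most 2 (and the width is exactly 2). -/

import Mathlib

/-- `P` is `(2+2)`-free: there are no four distinct elements `a, b, c, d` with `a < b` and
`c < d` such that each of `a, b` is incomparable with each of `c, d`. -/
def TwoTwoFree (P : Type*) [PartialOrder P] : Prop :=
  ¬ ∃ a b c d : P, a < b ∧ c < d ∧ a ≠ c ∧ a ≠ d ∧ b ≠ c ∧ b ≠ d ∧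
    ¬ a ≤ c ∧ ¬ c ≤ a ∧ ¬ a ≤ d ∧ ¬ d ≤ a ∧ ¬ b ≤ c ∧ ¬ c ≤ b ∧ ¬ b ≤ d ∧ ¬ d ≤ b

/-- `P` is `(1+1+1)`-free: `P` contains no antichain of three elements. -/
def OneOneOneFree (P : Type*) [PartialOrder P] : Prop :=
  ¬ ∃ a b c : P, a ≠ b ∧ a ≠ c ∧ b ≠ c ∧
    ¬ a ≤ b ∧ ¬ b ≤ a ∧ ¬ a ≤ c ∧ ¬ c ≤ a ∧ ¬ b ≤ c ∧ ¬ c ≤ b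

/-- `P` is irreducible with respect to ordinal sum: `P` cannot be partitioned into two
nonempty subsets `A, B` such that `a < b` for every `a ∈ A` and `b ∈ B`. -/
def OrdinalSumIrreducible (P : Type*) [PartialOrder P] : Prop :=
  ¬ ∃ A B : Set P, A.Nonempty ∧ B.Nonempty ∧ Disjoint A B ∧ A ∪ B = Set.univ ∧
    ∀ a ∈ A, ∀ b ∈ B, a < b

private lemma aux111 {P : Type*} [PartialOrder P] (h : OneOneOneFree P) {a b c : P}
    (h1 : ¬a ≤ b) (h2 : ¬b ≤ a) (h3 : ¬a ≤ c) (h4 : ¬c ≤ a) (h5 : ¬b ≤ c) (h6 : ¬c ≤ b) :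
    False :=
  h ⟨a, b, c, fun e => h1 (e ▸ le_refl a), fun e => h3 (e ▸ le_refl a),
    fun e => h5 (e ▸ le_refl b), h1, h2, h3, h4, h5, h6⟩

private lemma aux22 {P : Type*} [PartialOrder P] (h : TwoTwoFree P) {a b c d : P}
    (hab : a < b) (hcd : c < d)
    (h1 : ¬a ≤ c) (h2 : ¬c ≤ a) (h3 : ¬a ≤ d) (h4 : ¬d ≤ a)
    (h5 : ¬b ≤ c) (h6 : ¬c ≤ b) (h7 : ¬b ≤ d) (h8 : ¬d ≤ b) : False :=
  h ⟨a, b, c, d, hab, hcd, fun e => h1 (e ▸ le_refl a), fun e => h3 (e ▸ le_refl a),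
    fun e => h5 (e ▸ le_refl b), fun e => h7 (e ▸ le_refl b), h1, h2, h3, h4, h5, h6, h7, h8⟩

/-- Two potential 2-chains `u ≤ v`, `w ≤ z` (with the reverse inequalities known to fail)
whose elements are pairwise cross-incomparable force a `(2+2)` or a `(1+1+1)`. -/
private lemma auxCross {P : Type*} [PartialOrder P] (h22 : TwoTwoFree P)
    (h111 : OneOneOneFree P) {u v w z : P} (huv : ¬v ≤ u) (hwz : ¬z ≤ w)
    (h1 : ¬u ≤ w) (h2 : ¬w ≤ u) (h3 : ¬u ≤ z) (h4 : ¬z ≤ u)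
    (h5 : ¬v ≤ w) (h6 : ¬w ≤ v) (h7 : ¬v ≤ z) (h8 : ¬z ≤ v) : False := by
  by_cases huv' : u ≤ v
  · by_cases hwz' : w ≤ z
    · exact aux22 h22 (lt_of_le_not_ge huv' huv) (lt_of_le_not_ge hwz' hwz)
        h1 h2 h3 h4 h5 h6 h7 h8
    · exact aux111 h111 hwz' hwz h2 h1 h4 h3
  · exact aux111 h111 huv' huv h1 h2 h5 h6

/-- For a finite `{(2+2),(1+1+1)}`-free poset with `n ≥ 2` elements that is irreducible with
respect to ordinal sum, among any three pairwise distinct lower sets at least two are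
comparable under inclusion, and there exist two incomparable lower sets; i.e. `L(P)` has
width exactly 2. -/
theorem statement16 {P : Type*} [PartialOrder P] [Fintype P]
    (hn : 2 ≤ Fintype.card P)
    (h22 : TwoTwoFree P) (h111 : OneOneOneFree P) (hirr : OrdinalSumIrreducible P) :
    (∀ α β γ : Set P, IsLowerSet α → IsLowerSet β → IsLowerSet γ →
      α ≠ β → α ≠ γ → β ≠ γ →
      (α ⊆ β ∨ β ⊆ α) ∨ (α ⊆ γ ∨ γ ⊆ α) ∨ (β ⊆ γ ∨ γ ⊆ β)) ∧
    (∃ α β : Set P, IsLowerSet α ∧ IsLowerSet β ∧ ¬ α ⊆ β ∧ ¬ β ⊆ α) := by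
  constructor
  · intro α β γ hα hβ hγ _ _ _
    by_contra hcon
    push_neg at hcon
    obtain ⟨⟨hαβ, hβα⟩, ⟨hαγ, hγα⟩, hβγ, hγβ⟩ := hcon
    -- key : elements outside a lower set are never below elements inside it
    have key : ∀ (S : Set P), IsLowerSet S → ∀ {x y : P}, x ∈ S → y ∉ S → ¬ y ≤ x :=
      fun S hS x y hx hy hle => hy (hS hle hx)
    obtain ⟨x1, hx1α, hx1β⟩ := Set.not_subset.mp hαβ
    obtain ⟨x2, hx2β, hx2α⟩ := Set.not_subset.mp hβα
    obtain ⟨x3, hx3α, hx3γ⟩ := Set.not_subset.mp hαγ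
    obtain ⟨x4, hx4γ, hx4α⟩ := Set.not_subset.mp hγα
    obtain ⟨x5, hx5β, hx5γ⟩ := Set.not_subset.mp hβγ
    obtain ⟨x6, hx6γ, hx6β⟩ := Set.not_subset.mp hγβ
    -- all three "single" regions occupied yields a 3-antichain
    have H1 : (∃ x, x ∈ α ∧ x ∉ β ∧ x ∉ γ) → (∃ x, x ∉ α ∧ x ∈ β ∧ x ∉ γ) →
        (∃ x, x ∉ α ∧ x ∉ β ∧ x ∈ γ) → False := by
      rintro ⟨a, ha1, ha2, ha3⟩ ⟨b, hb1, hb2, hb3⟩ ⟨c, hc1, hc2, hc3⟩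
      exact aux111 h111 (key β hβ hb2 ha2) (key α hα ha1 hb1) (key γ hγ hc3 ha3)
        (key α hα ha1 hc1) (key γ hγ hc3 hb3) (key β hβ hb2 hc2)
    -- all three "double" regions occupied yields a 3-antichain
    have H2 : (∃ x, x ∈ α ∧ x ∈ β ∧ x ∉ γ) → (∃ x, x ∈ α ∧ x ∉ β ∧ x ∈ γ) →
        (∃ x, x ∉ α ∧ x ∈ β ∧ x ∈ γ) → False := by
      rintro ⟨a, ha1, ha2, ha3⟩ ⟨b, hb1, hb2, hb3⟩ ⟨c, hc1, hc2, hc3⟩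
      exact aux111 h111 (key γ hγ hb3 ha3) (key β hβ ha2 hb2) (key γ hγ hc3 ha3)
        (key α hα ha1 hc1) (key β hβ hc2 hb2) (key α hα hb1 hc1)
    by_cases e100 : ∃ x, x ∈ α ∧ x ∉ β ∧ x ∉ γ
    · by_cases e010 : ∃ x, x ∉ α ∧ x ∈ β ∧ x ∉ γ
      · by_cases e001 : ∃ x, x ∉ α ∧ x ∉ β ∧ x ∈ γ
        · exact H1 e100 e010 e001
        · -- ¬e001
          by_cases e110 : ∃ x, x ∈ α ∧ x ∈ β ∧ x ∉ γ
          · by_cases e101 : ∃ x, x ∈ α ∧ x ∉ β ∧ x ∈ γ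
            · by_cases e011 : ∃ x, x ∉ α ∧ x ∈ β ∧ x ∈ γ
              · exact H2 e110 e101 e011
              · -- ¬e001 and ¬e011 : contradiction via x4 ∈ γ \ α
                rcases em (x4 ∈ β) with h | h
                · exact e011 ⟨x4, hx4α, h, hx4γ⟩
                · exact e001 ⟨x4, hx4α, h, hx4γ⟩
            · -- ¬e001 and ¬e101 : contradiction via x6 ∈ γ \ β
              rcases em (x6 ∈ α) with h | h
              · exact e101 ⟨x6, h, hx6β, hx6γ⟩
              · exact e001 ⟨x6, h, hx6β, hx6γ⟩
          · -- ¬e001 and ¬e110 : main case C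
            have hpβ : x3 ∉ β := fun h => e110 ⟨x3, hx3α, h, hx3γ⟩    -- p = x3 : 100
            have hqα : x6 ∈ α := by
              by_contra h; exact e001 ⟨x6, h, hx6β, hx6γ⟩             -- q = x6 : 101
            have hrα : x5 ∉ α := fun h => e110 ⟨x5, h, hx5β, hx5γ⟩    -- r = x5 : 010
            have hsβ : x4 ∈ β := by
              by_contra h; exact e001 ⟨x4, hx4α, h, hx4γ⟩             -- s = x4 : 011
            exact auxCross h22 h111 (key γ hγ hx6γ hx3γ) (key γ hγ hx4γ hx5γ)
              (key β hβ hsβ hx6β) (key α hα hqα hx4α)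
              (key β hβ hx5β hx6β) (key α hα hqα hrα)
              (key β hβ hsβ hpβ) (key α hα hx3α hx4α)
              (key β hβ hx5β hpβ) (key α hα hx3α hrα)
      · -- ¬e010
        by_cases e110 : ∃ x, x ∈ α ∧ x ∈ β ∧ x ∉ γ
        · by_cases e101 : ∃ x, x ∈ α ∧ x ∉ β ∧ x ∈ γ
          · by_cases e011 : ∃ x, x ∉ α ∧ x ∈ β ∧ x ∈ γ
            · exact H2 e110 e101 e011
            · -- ¬e010 and ¬e011 : contradiction via x2 ∈ β \ α
              rcases em (x2 ∈ γ) with h | h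
              · exact e011 ⟨x2, hx2α, hx2β, h⟩
              · exact e010 ⟨x2, hx2α, hx2β, h⟩
          · -- ¬e010 and ¬e101 : main case B
            have hpγ : x1 ∉ γ := fun h => e101 ⟨x1, hx1α, hx1β, h⟩    -- p = x1 : 100
            have hqα : x5 ∈ α := by
              by_contra h; exact e010 ⟨x5, h, hx5β, hx5γ⟩             -- q = x5 : 110
            have hrγ : x2 ∈ γ := by
              by_contra h; exact e010 ⟨x2, hx2α, hx2β, h⟩             -- r = x2 : 011
            have hsα : x6 ∉ α := fun h => e101 ⟨x6, h, hx6β, hx6γ⟩    -- s = x6 : 001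
            exact auxCross h22 h111 (key β hβ hx5β hx1β) (key β hβ hx2β hx6β)
              (key γ hγ hrγ hx5γ) (key α hα hqα hx2α)
              (key γ hγ hx6γ hx5γ) (key α hα hqα hsα)
              (key β hβ hx2β hx1β) (key α hα hx1α hx2α)
              (key γ hγ hx6γ hpγ) (key α hα hx1α hsα)
        · -- ¬e010 and ¬e110 : contradiction via x5 ∈ β \ γ
          rcases em (x5 ∈ α) with h | h
          · exact e110 ⟨x5, h, hx5β, hx5γ⟩
          · exact e010 ⟨x5, h, hx5β, hx5γ⟩
    · -- ¬e100
      by_cases e110 : ∃ x, x ∈ α ∧ x ∈ β ∧ x ∉ γ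
      · by_cases e101 : ∃ x, x ∈ α ∧ x ∉ β ∧ x ∈ γ
        · by_cases e011 : ∃ x, x ∉ α ∧ x ∈ β ∧ x ∈ γ
          · exact H2 e110 e101 e011
          · -- ¬e100 and ¬e011 : main case A
            have hpβ : x3 ∈ β := by
              by_contra h; exact e100 ⟨x3, hx3α, h, hx3γ⟩             -- p = x3 : 110
            have hqγ : x1 ∈ γ := by
              by_contra h; exact e100 ⟨x1, hx1α, hx1β, h⟩             -- q = x1 : 101
            have hrγ : x2 ∉ γ := fun h => e011 ⟨x2, hx2α, hx2β, h⟩    -- r = x2 : 010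
            have hsβ : x4 ∉ β := fun h => e011 ⟨x4, hx4α, h, hx4γ⟩    -- s = x4 : 001
            exact auxCross h22 h111 (key α hα hx3α hx2α) (key α hα hx1α hx4α)
              (key γ hγ hqγ hx3γ) (key β hβ hpβ hx1β)
              (key γ hγ hx4γ hx3γ) (key β hβ hpβ hsβ)
              (key γ hγ hqγ hrγ) (key β hβ hx2β hx1β)
              (key γ hγ hx4γ hrγ) (key β hβ hx2β hsβ)
        · -- ¬e100 and ¬e101 : contradiction via x1 ∈ α \ β
          rcases em (x1 ∈ γ) with h | h
          · exact e101 ⟨x1, hx1α, hx1β, h⟩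
          · exact e100 ⟨x1, hx1α, hx1β, h⟩
      · -- ¬e100 and ¬e110 : contradiction via x3 ∈ α \ γ
        rcases em (x3 ∈ β) with h | h
        · exact e110 ⟨x3, hx3α, h, hx3γ⟩
        · exact e100 ⟨x3, hx3α, h, hx3γ⟩
  · -- existence of two incomparable lower sets
    have hinc : ∃ a b : P, ¬ a ≤ b ∧ ¬ b ≤ a := by
      by_contra h
      push_neg at h
      obtain ⟨m, -, hm⟩ := Finset.exists_minimal (s := (Finset.univ : Finset P))
        (Finset.univ_nonempty_iff.mpr (Fintype.card_pos_iff.mp (by omega)))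
      refine hirr ⟨{m}, {x | x ≠ m}, ⟨m, rfl⟩, ?_, ?_, ?_, ?_⟩
      · obtain ⟨b, hb⟩ := Fintype.exists_ne_of_one_lt_card (by omega) m
        exact ⟨b, hb⟩
      · exact Set.disjoint_left.mpr (fun a ha hb => hb ha)
      · ext x
        simp [em, eq_comm, or_comm, Classical.em (x = m)]
      · rintro a rfl b hb
        by_cases hab : a ≤ b
        · exact lt_of_le_of_ne hab (Ne.symm hb)
        · exact absurd (lt_of_le_of_ne (h a b hab) hb) (fun hlt => lt_irrefl _ (lt_of_le_of_lt (hm (Finset.mem_univ b) hlt.le) hlt))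
    obtain ⟨a, b, hab, hba⟩ := hinc
    refine ⟨Set.Iic a, Set.Iic b, isLowerSet_Iic a, isLowerSet_Iic b, ?_, ?_⟩
    · exact fun h => hab (h (le_refl a))
    · exact fun h => hba (h (le_refl b))
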